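/- Let A be an irreducible 0-1 countable matrix. If λ > exp h_Gur(Σ), then the vector v defined by v_k = Σ_{n=0}^∞ p_{ka}^{(n)} λ^{−n} (for a fixed vertex a) is a well-defined finite λ-subeigenvector of A which is deficient only in the coordinate a, satisfying λ^{−1}(Av)_k = v_k − δ_{ka}. -/

import Mathlib

open Filter
open scoped ENNReal NNReal

/-- `w : Fin (n+1) → S` is a path in the graph of the relation `R`. -/
def IsPath {S : Type*} (R : S → S → Prop) {n : ℕ} (w : Fin (n + 1) → S) : Prop :=
  ∀ i : Fin n, R (w i.castSucc) (w i.succ)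

/-- The number `p_{ka}^{(n)}` of paths of length `n` from `k` to `a`, as an `ℝ≥0∞`. -/
noncomputable def pathCount {S : Type*} (R : S → S → Prop) (n : ℕ) (k a : S) : ℝ≥0∞ :=
  ({w : Fin (n + 1) → S | w 0 = k ∧ w (Fin.last n) = a ∧ IsPath R w}.encard : ℝ≥0∞)

open scoped Classical

section Aux

variable {S : Type*} (R : S → S → Prop)

lemma pathCount_eq_tsum (n : ℕ) (k a : S) :
    pathCount R n k a
      = ∑' w : Fin (n + 1) → S,
          (if w 0 = k ∧ w (Fin.last n) = a ∧ IsPath R w then (1 : ℝ≥0∞) else 0) := by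
  rw [pathCount, ← ENNReal.tsum_set_one]
  exact (tsum_subtype _ fun _ => (1 : ℝ≥0∞)).trans
    (tsum_congr fun w => by simp [Set.indicator_apply, Set.mem_setOf_eq])

lemma pathCount_zero (k b : S) :
    pathCount R 0 k b = if k = b then (1 : ℝ≥0∞) else 0 := by
  have hpath : ∀ w : Fin 1 → S, IsPath R w := fun w i => i.elim0
  rw [pathCount]
  by_cases h : k = b
  · subst h
    have hset : {w : Fin 1 → S | w 0 = k ∧ w (Fin.last 0) = k ∧ IsPath R w}
        = {fun _ => k} := by
      ext w
      simp only [Set.mem_setOf_eq, Set.mem_singleton_iff]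
      constructor
      · rintro ⟨h1, -, -⟩
        funext i
        rw [show i = 0 from Subsingleton.elim (α := Fin 1) i 0]; exact h1
      · rintro rfl; exact ⟨rfl, rfl, hpath _⟩
    rw [hset, Set.encard_singleton]
    simp
  · have hset : {w : Fin 1 → S | w 0 = k ∧ w (Fin.last 0) = b ∧ IsPath R w} = ∅ := by
      ext w
      simp only [Set.mem_setOf_eq, Set.mem_empty_iff_false, iff_false, not_and]
      intro h1 h2
      rw [show Fin.last 0 = (0 : Fin 1) from rfl] at h2
      exact absurd (h1.symm.trans h2) h
    rw [hset, Set.encard_empty]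
    simp [h]

lemma isPath_cons {n : ℕ} (j : S) (u : Fin (n + 1) → S) :
    IsPath R (Fin.cons j u) ↔ R j (u 0) ∧ IsPath R u := by
  constructor
  · intro h
    refine ⟨?_, fun i => ?_⟩
    · have := h 0
      simpa using this
    · have := h i.succ
      simpa [← Fin.succ_castSucc] using this
  · rintro ⟨h1, h2⟩ i
    refine Fin.cases ?_ ?_ i
    · simpa using h1
    · intro i
      simpa [← Fin.succ_castSucc] using h2 i

lemma cons_last {n : ℕ} (j : S) (u : Fin (n + 1) → S) :
    (Fin.cons j u : Fin (n + 2) → S) (Fin.last (n + 1)) = u (Fin.last n) := by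
  rw [← Fin.succ_last, Fin.cons_succ]

lemma isPath_tail {n : ℕ} {w : Fin (n + 2) → S} (h : IsPath R w) :
    IsPath R (Fin.tail w) := fun i => by
  have := h i.succ
  simpa [Fin.tail, ← Fin.succ_castSucc] using this

lemma pathCount_succ (n : ℕ) (k a : S) :
    pathCount R (n + 1) k a
      = ∑' j : S, (if R k j then (1 : ℝ≥0∞) else 0) * pathCount R n j a := by
  have key : pathCount R (n + 1) k a
      = ∑' u : Fin (n + 1) → S,
          (if R k (u 0) ∧ u (Fin.last n) = a ∧ IsPath R u then (1 : ℝ≥0∞) else 0) := by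
    rw [pathCount_eq_tsum,
      ← Equiv.tsum_eq (Fin.consEquiv (fun _ : Fin (n + 2) => S))]
    have hsummand : ∀ (j : S) (u : Fin (n + 1) → S),
        (if (Fin.cons j u : Fin (n + 2) → S) 0 = k
            ∧ (Fin.cons j u : Fin (n + 2) → S) (Fin.last (n + 1)) = a
            ∧ IsPath R (Fin.cons j u) then (1 : ℝ≥0∞) else 0)
        = if j = k then
            (if R k (u 0) ∧ u (Fin.last n) = a ∧ IsPath R u then (1 : ℝ≥0∞) else 0)
          else 0 := by
      intro j u
      simp only [Fin.cons_zero, cons_last, isPath_cons]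
      by_cases hj : j = k
      · subst hj
        rw [if_pos rfl]
        exact if_congr (by tauto) rfl rfl
      · simp [hj]
    calc ∑' (c : S × (Fin (n + 1) → S)),
          (if (Fin.consEquiv (fun _ : Fin (n + 2) => S)) c 0 = k
              ∧ (Fin.consEquiv (fun _ : Fin (n + 2) => S)) c (Fin.last (n + 1)) = a
              ∧ IsPath R ((Fin.consEquiv (fun _ : Fin (n + 2) => S)) c)
            then (1 : ℝ≥0∞) else 0)
        = ∑' (c : S × (Fin (n + 1) → S)), (if c.1 = k then
            (if R k (c.2 0) ∧ c.2 (Fin.last n) = a ∧ IsPath R c.2 then (1 : ℝ≥0∞) else 0)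
          else 0) := tsum_congr fun c => hsummand c.1 c.2
      _ = ∑' (j : S) (u : Fin (n + 1) → S), (if j = k then
            (if R k (u 0) ∧ u (Fin.last n) = a ∧ IsPath R u then (1 : ℝ≥0∞) else 0)
          else 0) := ENNReal.tsum_prod (f := fun j (u : Fin (n + 1) → S) =>
            if j = k then
              (if R k (u 0) ∧ u (Fin.last n) = a ∧ IsPath R u then (1 : ℝ≥0∞) else 0)
            else 0)
      _ = ∑' (j : S), (if j = k then
            (∑' u : Fin (n + 1) → S,
              if R k (u 0) ∧ u (Fin.last n) = a ∧ IsPath R u then (1 : ℝ≥0∞) else 0)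
          else 0) := by
          refine tsum_congr fun j => ?_
          by_cases hj : j = k
          · simp [hj]
          · simp [hj]
      _ = _ := tsum_ite_eq k _
  rw [key]
  symm
  calc ∑' j : S, (if R k j then (1 : ℝ≥0∞) else 0) * pathCount R n j a
      = ∑' (j : S) (u : Fin (n + 1) → S),
          (if u 0 = j then
            (if R k (u 0) ∧ u (Fin.last n) = a ∧ IsPath R u then (1 : ℝ≥0∞) else 0)
          else 0) := by
        refine tsum_congr fun j => ?_
        rw [pathCount_eq_tsum, ← ENNReal.tsum_mul_left]
        refine tsum_congr fun u => ?_
        by_cases h0 : u 0 = j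
        · by_cases hR : R k j
          · simp [h0, hR]
          · simp [h0, hR]
        · simp [h0]
    _ = ∑' (u : Fin (n + 1) → S) (j : S),
          (if u 0 = j then
            (if R k (u 0) ∧ u (Fin.last n) = a ∧ IsPath R u then (1 : ℝ≥0∞) else 0)
          else 0) := ENNReal.tsum_comm
    _ = _ := by
        refine tsum_congr fun u => ?_
        refine (tsum_congr fun j => if_congr eq_comm rfl rfl).trans ?_
        exact tsum_ite_eq (u 0) _

lemma pathCount_le_step {j l : S} (h : R j l) (n : ℕ) (b : S) :
    pathCount R n l b ≤ pathCount R (n + 1) j b := by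
  rw [pathCount_succ]
  have hle := ENNReal.le_tsum
    (f := fun j' => (if R j j' then (1 : ℝ≥0∞) else 0) * pathCount R n j' b) l
  simpa [h] using hle

lemma pathCount_prepend : ∀ (m : ℕ) (w : Fin (m + 1) → S), IsPath R w →
    ∀ (n : ℕ) (b : S), pathCount R n (w (Fin.last m)) b ≤ pathCount R (m + n) (w 0) b := by
  intro m
  induction m with
  | zero =>
    intro w _ n b
    rw [Nat.zero_add, show Fin.last 0 = (0 : Fin 1) from rfl]
  | succ m ih =>
    intro w hw n b
    have htail := ih (Fin.tail w) (isPath_tail R hw) n b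
    have h1 : Fin.tail w (Fin.last m) = w (Fin.last (m + 1)) := by
      show w (Fin.last m).succ = _
      rw [Fin.succ_last]
    have hstep : R (w 0) (w (Fin.succ 0)) := by
      have := hw 0; simpa using this
    calc pathCount R n (w (Fin.last (m + 1))) b
        = pathCount R n (Fin.tail w (Fin.last m)) b := by rw [h1]
      _ ≤ pathCount R (m + n) (Fin.tail w 0) b := htail
      _ = pathCount R (m + n) (w (Fin.succ 0)) b := rfl
      _ ≤ pathCount R (m + n + 1) (w 0) b := pathCount_le_step R hstep _ _
      _ = pathCount R (m + 1 + n) (w 0) b := by rw [show m + n + 1 = m + 1 + n by omega]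

end Aux
section Main
set_option maxHeartbeats 1000000 in

open scoped Classical in
/-- Pruitt's construction: if `λ > exp h_Gur(Σ)`, then `v_k = Σ_n p_{ka}^{(n)} λ^{-n}`
is a well-defined finite `λ`-subeigenvector deficient only in coordinate `a`,
satisfying `λ⁻¹ (Av)_k = v_k − δ_{ka}`. -/
theorem pruitt_subeigenvector {S : Type*} [Countable S]
    (R : S → S → Prop)
    (hirr : ∀ a b : S, ∃ n : ℕ, ∃ w : Fin (n + 2) → S,
      w 0 = a ∧ w (Fin.last (n + 1)) = b ∧ IsPath R w)
    (a : S) (hGur : EReal)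
    (hG : hGur = Filter.limsup
      (fun n : ℕ => ENNReal.log (pathCount R n a a) / (n : EReal)) Filter.atTop)
    (lam : ℝ≥0) (hlam : EReal.exp hGur < (lam : ℝ≥0∞))
    (v : S → ℝ≥0∞)
    (hv : v = fun k => ∑' n : ℕ, pathCount R n k a * ((lam : ℝ≥0∞)⁻¹) ^ n) :
    (∀ k, v k ≠ ⊤) ∧
    (∀ k, (lam : ℝ≥0∞)⁻¹ * ∑' j, (if R k j then (1 : ℝ≥0∞) else 0) * v j =
      v k - (if k = a then 1 else 0)) ∧
    (∀ k, ∑' j, (if R k j then (1 : ℝ≥0∞) else 0) * v j ≤ (lam : ℝ≥0∞) * v k) ∧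
    (∀ k, k ≠ a → ∑' j, (if R k j then (1 : ℝ≥0∞) else 0) * v j = (lam : ℝ≥0∞) * v k) ∧
    (∑' j, (if R a j then (1 : ℝ≥0∞) else 0) * v j < (lam : ℝ≥0∞) * v a) := by
  subst hv hG
  set lamE : ℝ≥0∞ := (lam : ℝ≥0∞) with hlamE
  set x : ℝ≥0∞ := lamE⁻¹ with hx
  set p : ℕ → ℝ≥0∞ := fun n => pathCount R n a a with hp
  set hGur : EReal :=
    Filter.limsup (fun n : ℕ => ENNReal.log (pathCount R n a a) / (n : EReal)) Filter.atTop
    with hG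
  -- a loop at `a`
  obtain ⟨L', wl, hwl0, hwll, hwlp⟩ := hirr a a
  set L : ℕ := L' + 1 with hL
  have hLpos : 1 ≤ L := Nat.le_add_left 1 L'
  -- monotonicity under prepending loops
  have hmono : ∀ (j n : ℕ), p n ≤ p (j * L + n) := by
    intro j
    induction j with
    | zero => intro n; simp
    | succ j ih =>
      intro n
      refine (ih n).trans ?_
      have h1 := pathCount_prepend R (L' + 1) wl hwlp (j * L + n) a
      rw [hwl0, hwll] at h1
      have harith : L' + 1 + (j * L + n) = (j + 1) * L + n := by rw [hL]; ring
      rw [harith] at h1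
      exact h1
  have hloop : ∀ j : ℕ, (1 : ℝ≥0∞) ≤ p (j * L) := by
    intro j
    have := hmono j 0
    rw [Nat.add_zero] at this
    refine le_trans ?_ this
    rw [hp]; simp [pathCount_zero]
  -- hGur ≥ 0
  have hGur0 : (0 : EReal) ≤ hGur := by
    rw [hG]
    refine Filter.le_limsup_of_frequently_le' ?_
    rw [Filter.frequently_atTop]
    intro N
    refine ⟨N * L, Nat.le_mul_of_pos_right N (by omega), ?_⟩
    refine EReal.div_nonneg ?_ (by exact_mod_cast Nat.zero_le _)
    rw [ENNReal.zero_le_log_iff]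
    exact hloop N
  -- lam > 1 hence lam ≠ 0, lam ≠ ⊤
  have hlam1 : (1 : ℝ≥0∞) < lamE := by
    calc (1 : ℝ≥0∞) = EReal.exp 0 := by simp
    _ ≤ EReal.exp hGur := EReal.exp_monotone hGur0
    _ < lamE := hlam
  have hlam0 : lamE ≠ 0 := by intro h; rw [h] at hlam1; exact absurd hlam1 (by simp)
  have hlamtop : lamE ≠ ⊤ := ENNReal.coe_ne_top
  have hlaminv : lamE * x = 1 := ENNReal.mul_inv_cancel hlam0 hlamtop
  have hxtop : x ≠ ⊤ := ENNReal.inv_ne_top.mpr hlam0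
  -- choose c between exp hGur and lam
  obtain ⟨c, hc1, hc2⟩ := exists_between hlam
  have hctop : c ≠ ⊤ := (hc2.trans_le le_top).ne
  have hGurc : hGur < ENNReal.log c := by
    rw [← ENNReal.exp_log c] at hc1
    exact EReal.exp_lt_exp_iff.mp hc1
  -- eventual bound p n ≤ c ^ n
  have hev : ∀ᶠ n : ℕ in Filter.atTop,
      ENNReal.log (pathCount R n a a) / (n : EReal) < ENNReal.log c :=
    Filter.eventually_lt_of_limsup_lt (hG ▸ hGurc)
  obtain ⟨N₀, hN₀⟩ := Filter.eventually_atTop.mp hev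
  set M : ℕ := max N₀ 1 with hM
  have hbound : ∀ n, M ≤ n → p n ≤ c ^ n := by
    intro n hn
    have hn1 : 1 ≤ n := le_trans (le_max_right N₀ 1) hn
    have hdiv := (hN₀ n (le_trans (le_max_left N₀ 1) hn)).le
    have hnpos : (0 : EReal) < (n : EReal) := by
      exact_mod_cast EReal.natCast_lt_iff.mpr (by omega)
    have hntop : ((n : ℕ) : EReal) ≠ ⊤ := EReal.natCast_ne_top n
    rw [EReal.div_le_iff_le_mul hnpos hntop] at hdiv
    rw [← ENNReal.log_pow] at hdiv
    exact ENNReal.log_le_log_iff.mp hdiv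
  -- all p n finite
  have hpfin : ∀ n, p n ≠ ⊤ := by
    intro n
    have h1 : p n ≤ p (M * L + n) := hmono M n
    have h2 : p (M * L + n) ≤ c ^ (M * L + n) := by
      refine hbound _ ?_
      calc M ≤ M * L := Nat.le_mul_of_pos_right M (by omega)
      _ ≤ M * L + n := Nat.le_add_right _ _
    exact ((h1.trans h2).trans_lt (ENNReal.pow_lt_top hctop.lt_top)).ne
  -- ratio r < 1
  set r : ℝ≥0∞ := c * x with hr
  have hr1 : r < 1 := by
    rw [hr, ← hlaminv]
    exact (ENNReal.mul_lt_mul_iff_left (ENNReal.inv_ne_zero.mpr hlamtop) hxtop).mpr hc2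
  have hgeom : (∑' n : ℕ, r ^ n) ≠ ⊤ := by
    rw [ENNReal.tsum_geometric]
    exact ENNReal.inv_ne_top.mpr (tsub_pos_of_lt hr1).ne'
  -- v a finite
  have hva : (∑' n : ℕ, p n * x ^ n) ≠ ⊤ := by
    rw [← Summable.sum_add_tsum_nat_add' (f := fun n => p n * x ^ n) (k := M) ENNReal.summable]
    refine ENNReal.add_ne_top.mpr ⟨?_, ?_⟩
    · refine (ENNReal.sum_lt_top.mpr fun i _ => ?_).ne
      exact ENNReal.mul_lt_top (hpfin i).lt_top (ENNReal.pow_lt_top hxtop.lt_top)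
    · have hle : (∑' n : ℕ, p (n + M) * x ^ (n + M)) ≤ ∑' n : ℕ, r ^ n := by
        refine ENNReal.tsum_le_tsum fun n => ?_
        calc p (n + M) * x ^ (n + M) ≤ c ^ (n + M) * x ^ (n + M) := by
              exact mul_le_mul_left (hbound _ (Nat.le_add_left M n)) _
        _ = r ^ (n + M) := by rw [hr, mul_pow]
        _ ≤ r ^ n := pow_le_pow_right_of_le_one' hr1.le (Nat.le_add_right _ _)
      exact (hle.trans_lt hgeom.lt_top).ne
  -- general finiteness
  have hvfin : ∀ k, (∑' n : ℕ, pathCount R n k a * x ^ n) ≠ ⊤ := by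
    intro k
    obtain ⟨m, w, hw0, hwlast, hwp⟩ := hirr a k
    have hshift : ∀ n, pathCount R n k a ≤ p (m + 1 + n) := by
      intro n
      have h1 := pathCount_prepend R (m + 1) w hwp n a
      rw [hw0, hwlast] at h1
      exact h1
    have hkey : (∑' n : ℕ, pathCount R n k a * x ^ n)
        ≤ lamE ^ (m + 1) * ∑' n : ℕ, p n * x ^ n := by
      rw [← ENNReal.tsum_mul_left]
      have step1 : (∑' n : ℕ, pathCount R n k a * x ^ n)
          ≤ ∑' n : ℕ, lamE ^ (m + 1) * (p (n + (m + 1)) * x ^ (n + (m + 1))) := by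
        refine ENNReal.tsum_le_tsum fun n => ?_
        have hpow : lamE ^ (m + 1) * x ^ (n + (m + 1)) = x ^ n := by
          rw [pow_add x n (m + 1), mul_comm (x ^ n), ← mul_assoc, ← mul_pow, hlaminv, one_pow, one_mul]
        calc pathCount R n k a * x ^ n ≤ p (m + 1 + n) * x ^ n :=
              mul_le_mul_left (hshift n) _
        _ = lamE ^ (m + 1) * (p (n + (m + 1)) * x ^ (n + (m + 1))) := by
              rw [Nat.add_comm (m + 1) n, ← hpow]; ring
      refine step1.trans ?_
      have htail : (∑' n : ℕ, p (n + (m + 1)) * x ^ (n + (m + 1)))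
          ≤ ∑' n : ℕ, p n * x ^ n := by
        rw [← Summable.sum_add_tsum_nat_add' (f := fun n => p n * x ^ n) (k := m + 1) ENNReal.summable]
        exact le_add_self
      calc (∑' n : ℕ, lamE ^ (m + 1) * (p (n + (m + 1)) * x ^ (n + (m + 1))))
          = lamE ^ (m + 1) * ∑' n : ℕ, p (n + (m + 1)) * x ^ (n + (m + 1)) :=
            ENNReal.tsum_mul_left
      _ ≤ lamE ^ (m + 1) * ∑' n : ℕ, p n * x ^ n := mul_le_mul_right htail _
      _ = ∑' n : ℕ, lamE ^ (m + 1) * (p n * x ^ n) := ENNReal.tsum_mul_left.symm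
    refine (hkey.trans_lt ?_).ne
    exact ENNReal.mul_lt_top (ENNReal.pow_lt_top hlamtop.lt_top) hva.lt_top
  -- the recurrence
  have hrec : ∀ k, (∑' j, (if R k j then (1 : ℝ≥0∞) else 0)
        * ∑' n : ℕ, pathCount R n j a * x ^ n)
      = ∑' n : ℕ, pathCount R (n + 1) k a * x ^ n := by
    intro k
    calc (∑' j, (if R k j then (1 : ℝ≥0∞) else 0) * ∑' n : ℕ, pathCount R n j a * x ^ n)
        = ∑' (j : S) (n : ℕ), (if R k j then (1 : ℝ≥0∞) else 0) * pathCount R n j a * x ^ n := by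
          refine tsum_congr fun j => ?_
          rw [← ENNReal.tsum_mul_left]
          exact tsum_congr fun n => (mul_assoc _ _ _).symm
      _ = ∑' (n : ℕ) (j : S), (if R k j then (1 : ℝ≥0∞) else 0) * pathCount R n j a * x ^ n :=
          ENNReal.tsum_comm
      _ = ∑' n : ℕ, (∑' j : S, (if R k j then (1 : ℝ≥0∞) else 0) * pathCount R n j a) * x ^ n := by
          exact tsum_congr fun n => ENNReal.tsum_mul_right
      _ = _ := by
          refine tsum_congr fun n => ?_
          rw [← pathCount_succ]
  -- the key identity λ⁻¹ (Av)_k = v_k - δ_{ka}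
  have hkey : ∀ k, x * (∑' j, (if R k j then (1 : ℝ≥0∞) else 0)
        * ∑' n : ℕ, pathCount R n j a * x ^ n)
      = (∑' n : ℕ, pathCount R n k a * x ^ n) - (if k = a then 1 else 0) := by
    intro k
    rw [hrec k, ← ENNReal.tsum_mul_left]
    have hsplit : (∑' n : ℕ, pathCount R n k a * x ^ n)
        = pathCount R 0 k a * x ^ 0 + ∑' n : ℕ, pathCount R (n + 1) k a * x ^ (n + 1) :=
      tsum_eq_zero_add' ENNReal.summable
    rw [hsplit, pathCount_zero, pow_zero, mul_one]
    rw [ENNReal.add_sub_cancel_left (by split <;> simp)]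
    exact tsum_congr fun n => by rw [pow_succ, mul_comm (x ^ n) x]; ring
  refine ⟨hvfin, hkey, ?_, ?_, ?_⟩
  · intro k
    have h1 : (∑' j, (if R k j then (1 : ℝ≥0∞) else 0) * ∑' n : ℕ, pathCount R n j a * x ^ n)
        = lamE * (x * (∑' j, (if R k j then (1 : ℝ≥0∞) else 0)
            * ∑' n : ℕ, pathCount R n j a * x ^ n)) := by
      rw [← mul_assoc, hlaminv, one_mul]
    rw [h1, hkey k]
    exact mul_le_mul_right tsub_le_self _
  · intro k hk
    have h1 : (∑' j, (if R k j then (1 : ℝ≥0∞) else 0) * ∑' n : ℕ, pathCount R n j a * x ^ n)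
        = lamE * (x * (∑' j, (if R k j then (1 : ℝ≥0∞) else 0)
            * ∑' n : ℕ, pathCount R n j a * x ^ n)) := by
      rw [← mul_assoc, hlaminv, one_mul]
    rw [h1, hkey k, if_neg hk, tsub_zero]
  · have h1 : (∑' j, (if R a j then (1 : ℝ≥0∞) else 0) * ∑' n : ℕ, pathCount R n j a * x ^ n)
        = lamE * (x * (∑' j, (if R a j then (1 : ℝ≥0∞) else 0)
            * ∑' n : ℕ, pathCount R n j a * x ^ n)) := by
      rw [← mul_assoc, hlaminv, one_mul]
    rw [h1, hkey a, if_pos rfl]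
    refine (ENNReal.mul_lt_mul_iff_right hlam0 hlamtop).mpr ?_
    have hva1 : (1 : ℝ≥0∞) ≤ ∑' n : ℕ, pathCount R n a a * x ^ n := by
      have hle := ENNReal.le_tsum (f := fun n => pathCount R n a a * x ^ n) 0
      rw [pathCount_zero, pow_zero, mul_one, if_pos rfl] at hle
      exact hle
    exact ENNReal.sub_lt_self (hvfin a) (by intro h; rw [h] at hva1; simp at hva1) one_ne_zero

end Main
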